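/- Let (E_i) be i.i.d. standard exponentials and w_k = 1/(E_1+⋯+E_k). Then for every N ≥ 1, E[ (Σ_{k=1}^N k^{-1}) / (Σ_{k=1}^N w_k) ] ≤ 1. -/

import Mathlib

open MeasureTheory ProbabilityTheory Filter Real
open scoped ENNReal NNReal

lemma expPDFReal_one_eq (x : ℝ) :
    exponentialPDFReal 1 x = if 0 ≤ x then exp (-x) else 0 := by
  rw [exponentialPDFReal, gammaPDFReal]
  split_ifs with h
  · simp [Real.Gamma_one, Real.rpow_zero]
  · rfl

lemma expPDF_times_x_eq (x : ℝ) :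
    exponentialPDFReal 1 x * x
      = Set.indicator (Set.Ioi 0) (fun x => exp (-x) * x ^ ((2:ℝ) - 1)) x := by
  rcases lt_trichotomy x 0 with h | h | h
  · rw [expPDFReal_one_eq, if_neg (not_le.2 h), Set.indicator_of_notMem (by simpa using h.le)]
    ring
  · subst h
    simp
  · rw [expPDFReal_one_eq, if_pos h.le, Set.indicator_of_mem (by simpa using h)]
    norm_num [Real.rpow_one]

lemma expPDF_times_x_integrable :
    Integrable (fun x => exponentialPDFReal 1 x * x) := by
  have h := (Real.GammaIntegral_convergent (by norm_num : (0:ℝ) < 2))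
  have := h.integrable_indicator measurableSet_Ioi
  exact this.congr (by filter_upwards with x using (expPDF_times_x_eq x).symm)

lemma expPDF_times_x_integral : ∫ x, exponentialPDFReal 1 x * x = 1 := by
  have h1 : ∫ x, exponentialPDFReal 1 x * x
      = ∫ x in Set.Ioi (0:ℝ), exp (-x) * x ^ ((2:ℝ) - 1) := by
    rw [← integral_indicator measurableSet_Ioi]
    exact integral_congr_ae (by filter_upwards with x using expPDF_times_x_eq x)
  rw [h1, ← Real.Gamma_eq_integral (by norm_num : (0:ℝ) < 2), Real.Gamma_two]

lemma expMeasure_one_eq :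
    expMeasure 1
      = volume.withDensity fun x => ((exponentialPDFReal 1 x).toNNReal : ℝ≥0∞) := rfl

lemma expPDF_toNNReal_meas : Measurable fun x => (exponentialPDFReal 1 x).toNNReal :=
  (measurable_exponentialPDFReal 1).real_toNNReal

lemma exp_smul_eq (x : ℝ) :
    (exponentialPDFReal 1 x).toNNReal • x = exponentialPDFReal 1 x * x := by
  rw [NNReal.smul_def, smul_eq_mul, Real.coe_toNNReal _ (exponentialPDFReal_nonneg one_pos x)]

lemma exp_mean : ∫ x, x ∂(expMeasure 1) = 1 := by
  rw [expMeasure_one_eq, integral_withDensity_eq_integral_smul expPDF_toNNReal_meas]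
  simp_rw [exp_smul_eq]
  exact expPDF_times_x_integral

lemma exp_integrable : Integrable id (expMeasure 1) := by
  rw [expMeasure_one_eq, integrable_withDensity_iff_integrable_smul expPDF_toNNReal_meas]
  refine expPDF_times_x_integrable.congr ?_
  filter_upwards with x using (exp_smul_eq x).symm

lemma expMeasure_Iic_zero : expMeasure 1 (Set.Iic 0) = 0 := by
  show (volume.withDensity (exponentialPDF 1)) (Set.Iic 0) = 0
  rw [withDensity_apply _ measurableSet_Iic]
  calc ∫⁻ x in Set.Iic 0, exponentialPDF 1 x
      = ∫⁻ x in Set.Iio 0, exponentialPDF 1 x :=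
        setLIntegral_congr Iio_ae_eq_Iic.symm
    _ = 0 := lintegral_exponentialPDF_of_nonpos le_rfl

/-- E[ (Σ_{k=1}^N 1/k) / (Σ_{k=1}^N w_k) ] ≤ 1 for every N ≥ 1,
    where w_k = 1/(E_1+⋯+E_k) with (E_i) i.i.d. standard exponentials. -/
theorem harmonic_over_sum_wk {Ω : Type*} [MeasurableSpace Ω] (P : Measure Ω)
    [IsProbabilityMeasure P] (E : ℕ → Ω → ℝ) (hmeas : ∀ i, Measurable (E i))
    (hindep : iIndepFun E P)
    (hdist : ∀ i, P.map (E i) = expMeasure 1) :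
    ∀ N : ℕ, 1 ≤ N →
      ∫ ω, (∑ k ∈ Finset.Icc 1 N, (k : ℝ)⁻¹) /
        (∑ k ∈ Finset.Icc 1 N, (∑ i ∈ Finset.range k, E i ω)⁻¹) ∂P ≤ 1 := by
  intro N hN
  -- integrability and mean of each E i
  have hint : ∀ i, Integrable (E i) P := by
    intro i
    have h : Integrable id (P.map (E i)) := by rw [hdist i]; exact exp_integrable
    rw [integrable_map_measure aestronglyMeasurable_id (hmeas i).aemeasurable] at h
    exact h
  have hmean : ∀ i, ∫ ω, E i ω ∂P = 1 := by
    intro i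
    have h := integral_map (μ := P) (hmeas i).aemeasurable
      (f := fun x : ℝ => x) aestronglyMeasurable_id
    rw [hdist i, exp_mean] at h
    exact h.symm
  -- a.e. positivity
  have hpos : ∀ᵐ ω ∂P, ∀ i, 0 < E i ω := by
    rw [ae_all_iff]
    intro i
    have h0 : P ((E i) ⁻¹' (Set.Iic 0)) = 0 := by
      rw [← Measure.map_apply (hmeas i) measurableSet_Iic, hdist i]
      exact expMeasure_Iic_zero
    rw [ae_iff]
    convert h0 using 2
    ext ω
    simp [not_lt]
  set H : ℝ := ∑ k ∈ Finset.Icc 1 N, (k : ℝ)⁻¹ with hH_def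
  have hH : 0 < H := by
    apply Finset.sum_pos
    · intro k hk
      have : 1 ≤ k := (Finset.mem_Icc.1 hk).1
      positivity
    · exact ⟨1, Finset.mem_Icc.2 ⟨le_rfl, hN⟩⟩
  -- the majorant
  set G : Ω → ℝ := fun ω =>
    (∑ k ∈ Finset.Icc 1 N, (∑ i ∈ Finset.range k, E i ω) / (k : ℝ) ^ 2) / H with hG_def
  have hG_int : Integrable G P := by
    apply Integrable.div_const
    apply integrable_finset_sum
    intro k _
    exact (integrable_finset_sum _ fun i _ => hint i).div_const _
  have hG_val : ∫ ω, G ω ∂P = 1 := by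
    rw [hG_def]
    simp only
    rw [integral_div, integral_finset_sum _
      (fun k _ => (integrable_finset_sum _ fun i _ => hint i).div_const _)]
    have : ∀ k ∈ Finset.Icc 1 N,
        ∫ ω, (∑ i ∈ Finset.range k, E i ω) / (k : ℝ) ^ 2 ∂P = (k : ℝ)⁻¹ := by
      intro k hk
      have hk1 : 1 ≤ k := (Finset.mem_Icc.1 hk).1
      rw [integral_div, integral_finset_sum _ (fun i _ => hint i)]
      simp only [hmean]
      rw [Finset.sum_const, Finset.card_range, nsmul_eq_mul, mul_one]
      have hk0 : (k : ℝ) ≠ 0 := Nat.cast_ne_zero.2 (by omega)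
      field_simp
    rw [Finset.sum_congr rfl this]
    exact div_self hH.ne'
  -- pointwise bound
  have hbound : ∀ᵐ ω ∂P,
      H / (∑ k ∈ Finset.Icc 1 N, (∑ i ∈ Finset.range k, E i ω)⁻¹) ≤ G ω := by
    filter_upwards [hpos] with ω hω
    set S : ℕ → ℝ := fun k => ∑ i ∈ Finset.range k, E i ω with hS_def
    have hSpos : ∀ k ∈ Finset.Icc 1 N, 0 < S k := by
      intro k hk
      have hk1 : 1 ≤ k := (Finset.mem_Icc.1 hk).1
      apply Finset.sum_pos (fun i _ => hω i)
      exact ⟨0, Finset.mem_range.2 (by omega)⟩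
    have hA : 0 < ∑ k ∈ Finset.Icc 1 N, (S k)⁻¹ := by
      apply Finset.sum_pos (fun k hk => inv_pos.2 (hSpos k hk))
      exact ⟨1, Finset.mem_Icc.2 ⟨le_rfl, hN⟩⟩
    have hCS : H ^ 2 ≤ (∑ k ∈ Finset.Icc 1 N, (S k)⁻¹)
        * ∑ k ∈ Finset.Icc 1 N, S k / (k : ℝ) ^ 2 := by
      apply Finset.sum_sq_le_sum_mul_sum_of_sq_eq_mul
      · intro k hk; exact (inv_pos.2 (hSpos k hk)).le
      · intro k hk
        exact div_nonneg (hSpos k hk).le (by positivity)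
      · intro k hk
        have hk1 : 1 ≤ k := (Finset.mem_Icc.1 hk).1
        have hk0 : (k : ℝ) ≠ 0 := Nat.cast_ne_zero.2 (by omega)
        have hS0 : S k ≠ 0 := (hSpos k hk).ne'
        field_simp
    show H / (∑ k ∈ Finset.Icc 1 N, (S k)⁻¹)
      ≤ (∑ k ∈ Finset.Icc 1 N, S k / (k : ℝ) ^ 2) / H
    rw [div_le_div_iff₀ hA hH]
    calc H * H = H ^ 2 := by ring
      _ ≤ _ := hCS
      _ = (∑ k ∈ Finset.Icc 1 N, S k / (k : ℝ) ^ 2)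
          * ∑ k ∈ Finset.Icc 1 N, (S k)⁻¹ := mul_comm _ _
  -- measurability of the integrand
  have hmeas' : Measurable fun ω =>
      H / (∑ k ∈ Finset.Icc 1 N, (∑ i ∈ Finset.range k, E i ω)⁻¹) :=
    measurable_const.div
      (Finset.measurable_sum _ fun k _ =>
        (Finset.measurable_sum _ fun i _ => hmeas i).inv)
  have hnonneg : ∀ᵐ ω ∂P,
      0 ≤ H / (∑ k ∈ Finset.Icc 1 N, (∑ i ∈ Finset.range k, E i ω)⁻¹) := by
    filter_upwards [hpos] with ω hω
    have : 0 ≤ ∑ k ∈ Finset.Icc 1 N, (∑ i ∈ Finset.range k, E i ω)⁻¹ := by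
      apply Finset.sum_nonneg
      intro k hk
      have : 0 ≤ ∑ i ∈ Finset.range k, E i ω :=
        Finset.sum_nonneg fun i _ => (hω i).le
      positivity
    positivity
  have hint' : Integrable (fun ω =>
      H / (∑ k ∈ Finset.Icc 1 N, (∑ i ∈ Finset.range k, E i ω)⁻¹)) P := by
    refine hG_int.mono' hmeas'.aestronglyMeasurable ?_
    filter_upwards [hbound, hnonneg] with ω h1 h2
    rw [Real.norm_eq_abs, abs_of_nonneg h2]
    exact h1
  calc ∫ ω, H / (∑ k ∈ Finset.Icc 1 N, (∑ i ∈ Finset.range k, E i ω)⁻¹) ∂P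
      ≤ ∫ ω, G ω ∂P := integral_mono_ae hint' hG_int hbound
    _ = 1 := hG_val
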